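/- Let Φ₁, Φ₂ be strictly plurisubharmonic quadratic weights on ℂ with associated quantities a = α₂/α₁ and b = |β₂−β₁|/α₁. If b = 0 and a ≥ 1, then the embedding norm N(Φ₁,Φ₂) = sup{‖u‖_{Φ₂}/‖u‖_{Φ₁} : u entire, 0 < ‖u‖_{Φ₁} < ∞} equals a^{−1/2}. -/

import Mathlib

open MeasureTheory

/-- The Gaussian-weighted `L²` norm of a function on `ℂ`, valued in `[0,∞]`. -/
noncomputable def wnorm (Φ : ℂ → ℝ) (f : ℂ → ℂ) : ENNReal :=
  (∫⁻ z : ℂ, ENNReal.ofReal (‖f z‖ ^ 2 * Real.exp (-2 * Φ z))) ^ (1 / 2 : ℝ)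

/-- The norm of the embedding `H_{Φ₁} ↪ H_{Φ₂}`: the supremum of `‖u‖_{Φ₂}/‖u‖_{Φ₁}`
over entire `u` with `0 < ‖u‖_{Φ₁} < ∞`, valued in `[0,∞]`. -/
noncomputable def embNorm (Φ₁ Φ₂ : ℂ → ℝ) : ENNReal :=
  ⨆ u ∈ {u : ℂ → ℂ | Differentiable ℂ u ∧ 0 < wnorm Φ₁ u ∧ wnorm Φ₁ u < ⊤},
    wnorm Φ₂ u / wnorm Φ₁ u

section Aux

open Complex Real Set intervalIntegral

attribute [local fun_prop] Complex.continuous_normSq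

noncomputable def Cint (v : ℂ → ℂ) (w : ℂ) : ℝ :=
  ∫ θ in (0:ℝ)..(2*π), Complex.normSq (v (w * Complex.exp (θ * Complex.I)))

lemma Cint_nonneg (v : ℂ → ℂ) (w : ℂ) : 0 ≤ Cint v w := by
  apply intervalIntegral.integral_nonneg (by positivity)
  intro θ _
  exact Complex.normSq_nonneg _

lemma Cint_rotate {v : ℂ → ℂ} (w : ℂ) : Cint v w = Cint v ((‖w‖ : ℝ) : ℂ) := by
  rcases eq_or_ne w 0 with rfl | hw
  · simp [Cint]
  · have hper : Function.Periodic
        (fun θ : ℝ => Complex.normSq (v (((‖w‖ : ℝ) : ℂ) * Complex.exp (θ * Complex.I))))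
        (2*π) := by
      intro θ
      have : ((θ + 2*π : ℝ) : ℂ) * Complex.I = θ * Complex.I + 2 * π * Complex.I := by
        push_cast; ring
      simp only [this, Complex.exp_add, Complex.exp_two_pi_mul_I, mul_one]
    have key : ∀ θ : ℝ, w * Complex.exp (θ * Complex.I)
        = ((‖w‖ : ℝ) : ℂ) * Complex.exp (((θ + Complex.arg w : ℝ) : ℂ) * Complex.I) := by
      intro θ
      conv_lhs => rw [← Complex.norm_mul_exp_arg_mul_I w]
      rw [mul_assoc, ← Complex.exp_add]
      congr 2
      push_cast; ring
    unfold Cint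
    rw [intervalIntegral.integral_congr (g := fun θ : ℝ =>
        Complex.normSq (v (((‖w‖ : ℝ) : ℂ) * Complex.exp (((θ + Complex.arg w : ℝ) : ℂ) * Complex.I))))
        (fun θ _ => by rw [key])]
    rw [intervalIntegral.integral_comp_add_right (a := (0:ℝ)) (b := 2*π)
      (fun θ : ℝ => Complex.normSq (v (((‖w‖ : ℝ) : ℂ) * Complex.exp (θ * Complex.I))))]
    have := hper.intervalIntegral_add_eq (0 + Complex.arg w) 0
    simpa [add_comm] using this

lemma hasDerivAt_conjconj {v : ℂ → ℂ} {z d : ℂ}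
    (h : HasDerivAt v d ((starRingEnd ℂ) z)) :
    HasDerivAt (fun w => (starRingEnd ℂ) (v ((starRingEnd ℂ) w))) ((starRingEnd ℂ) d) z := by
  rw [hasDerivAt_iff_tendsto] at h ⊢
  have hc : Filter.Tendsto (fun w : ℂ => (starRingEnd ℂ) w) (nhds z) (nhds ((starRingEnd ℂ) z)) :=
    (Complex.continuous_conj.tendsto z)
  have := h.comp hc
  apply this.congr
  intro w
  simp only [Function.comp]
  congr 1
  · rw [← map_sub, RCLike.norm_conj]
  · rw [show v ((starRingEnd ℂ) w) - v ((starRingEnd ℂ) z) - ((starRingEnd ℂ) w - (starRingEnd ℂ) z) • d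
        = (starRingEnd ℂ) ((starRingEnd ℂ) (v ((starRingEnd ℂ) w)) - (starRingEnd ℂ) (v ((starRingEnd ℂ) z)) - (w - z) • ((starRingEnd ℂ) d)) by
      simp [smul_eq_mul, map_sub, map_mul, Complex.conj_conj]]
    rw [RCLike.norm_conj]

lemma diff_conjconj {v : ℂ → ℂ} (hv : Differentiable ℂ v) :
    Differentiable ℂ (fun w => (starRingEnd ℂ) (v ((starRingEnd ℂ) w))) := fun z =>
  (hasDerivAt_conjconj ((hv _).hasDerivAt)).differentiableAt

lemma continuous_deriv_of_diff {v : ℂ → ℂ} (hv : Differentiable ℂ v) :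
    Continuous (deriv v) := by
  have h1 : Continuous (fderiv ℂ v) :=
    continuous_iff_continuousAt.2 fun x => ((hv.analyticAt x).fderiv).continuousAt
  have h2 : Continuous fun x => fderiv ℂ v x 1 :=
    (ContinuousLinearMap.apply ℂ ℂ (1:ℂ)).continuous.comp h1
  have : (deriv v) = fun x => fderiv ℂ v x 1 := by
    funext x; rw [fderiv_apply_one_eq_deriv]
  rw [this]; exact h2

lemma Cint_mono {v : ℂ → ℂ} (hv : Differentiable ℂ v) {s r : ℝ} (hs : 0 ≤ s) (hsr : s ≤ r) :
    Cint v s ≤ Cint v r := by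
  rcases eq_or_lt_of_le (hs.trans hsr) with hr0 | hr0
  · have hs0 : s = 0 := le_antisymm (hsr.trans hr0.symm.le) hs
    rw [hs0, ← hr0]
  obtain ⟨vs, hvs⟩ : ∃ f : ℂ → ℂ, f = fun z => (starRingEnd ℂ) (v ((starRingEnd ℂ) z)) := ⟨_, rfl⟩
  have hvsd : Differentiable ℂ vs := hvs ▸ diff_conjconj hv
  have hvc : Continuous v := hv.continuous
  have hvsc : Continuous vs := hvsd.continuous
  have hdc : Continuous (deriv v) := continuous_deriv_of_diff hv
  have hdsc : Continuous (deriv vs) := continuous_deriv_of_diff hvsd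
  obtain ⟨e, he⟩ : ∃ f : ℝ → ℂ, f = fun θ : ℝ => Complex.exp (θ * Complex.I) := ⟨_, rfl⟩
  have hec : Continuous e := by rw [he]; apply Complex.continuous_exp.comp; continuity
  have hnorme : ∀ θ, ‖e θ‖ = 1 := fun θ => by
    rw [he]; exact Complex.norm_exp_ofReal_mul_I θ
  obtain ⟨g, hg⟩ : ∃ f : ℂ → ℂ,
      f = fun w => ∫ θ in (0:ℝ)..(2*π), v (w * e θ) * vs (w * e (-θ)) := ⟨_, rfl⟩
  have hconj_e : ∀ (w : ℂ) (θ : ℝ), (starRingEnd ℂ) (w * e (-θ)) = (starRingEnd ℂ) w * e θ := by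
    intro w θ
    rw [map_mul]
    congr 1
    rw [he]
    simp only [← Complex.exp_conj, map_mul, Complex.conj_I, Complex.conj_ofReal]
    push_cast
    ring_nf
  have hvs_norm : ∀ z : ℂ, ‖vs z‖ = ‖v ((starRingEnd ℂ) z)‖ := by
    intro z; rw [hvs]; exact RCLike.norm_conj _
  -- differentiability of g
  have gdiff : Differentiable ℂ g := by
    intro w₀
    obtain ⟨C, hC⟩ := (isCompact_closedBall (0:ℂ) (‖w₀‖+1)).exists_bound_of_continuousOn
      (f := fun x => ‖v x‖ + ‖deriv v x‖ + ‖vs x‖ + ‖deriv vs x‖)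
      (by fun_prop)
    have hCb : ∀ x ∈ Metric.closedBall (0:ℂ) (‖w₀‖+1),
        ‖v x‖ ≤ C ∧ ‖deriv v x‖ ≤ C ∧ ‖vs x‖ ≤ C ∧ ‖deriv vs x‖ ≤ C := by
      intro x hx
      have h' : ‖v x‖ + ‖deriv v x‖ + ‖vs x‖ + ‖deriv vs x‖ ≤ C := (le_abs_self _).trans (hC x hx)
      have n1 : (0:ℝ) ≤ ‖v x‖ := norm_nonneg _
      have n2 : (0:ℝ) ≤ ‖deriv v x‖ := norm_nonneg _
      have n3 : (0:ℝ) ≤ ‖vs x‖ := norm_nonneg _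
      have n4 : (0:ℝ) ≤ ‖deriv vs x‖ := norm_nonneg _
      exact ⟨by linarith, by linarith, by linarith, by linarith⟩
    have hmem : ∀ (x : ℂ), x ∈ Metric.ball w₀ 1 → ∀ θ : ℝ,
        x * e θ ∈ Metric.closedBall (0:ℂ) (‖w₀‖+1) := by
      intro x hx θ
      rw [Metric.mem_closedBall, dist_zero_right, norm_mul, hnorme, mul_one]
      have hxw := mem_ball_iff_norm.1 hx
      calc ‖x‖ = ‖w₀ + (x - w₀)‖ := by ring_nf
        _ ≤ ‖w₀‖ + ‖x - w₀‖ := norm_add_le _ _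
        _ ≤ ‖w₀‖ + 1 := by linarith
    have key := intervalIntegral.hasDerivAt_integral_of_dominated_loc_of_deriv_le
      (F := fun x θ => v (x * e θ) * vs (x * e (-θ)))
      (F' := fun x θ => deriv v (x * e θ) * e θ * vs (x * e (-θ))
        + v (x * e θ) * (deriv vs (x * e (-θ)) * e (-θ)))
      (x₀ := w₀) (s := Metric.ball w₀ 1) (a := 0) (b := 2*π) (μ := volume)
      (bound := fun _ => C*C + C*C) (Metric.ball_mem_nhds w₀ one_pos) ?_ ?_ ?_ ?_ ?_ ?_
    · rw [hg]; exact key.2.differentiableAt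
    · filter_upwards with x
      apply Continuous.aestronglyMeasurable
      fun_prop
    · apply Continuous.intervalIntegrable
      fun_prop
    · apply Continuous.aestronglyMeasurable
      fun_prop
    · filter_upwards with θ _ x hx
      have h1 := hCb _ (hmem x hx θ)
      have h2 := hCb _ (hmem x hx (-θ))
      have hCpos : (0:ℝ) ≤ C := le_trans (norm_nonneg _) h1.1
      calc ‖deriv v (x * e θ) * e θ * vs (x * e (-θ)) +
            v (x * e θ) * (deriv vs (x * e (-θ)) * e (-θ))‖
          ≤ ‖deriv v (x * e θ) * e θ * vs (x * e (-θ))‖ +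
            ‖v (x * e θ) * (deriv vs (x * e (-θ)) * e (-θ))‖ := norm_add_le _ _
        _ ≤ C*C + C*C := by
            apply add_le_add
            · rw [norm_mul, norm_mul, hnorme, mul_one]
              exact mul_le_mul h1.2.1 h2.2.2.1 (norm_nonneg _) hCpos
            · rw [norm_mul, norm_mul, hnorme, mul_one]
              exact mul_le_mul h1.1 h2.2.2.2 (norm_nonneg _) hCpos
    · apply Continuous.intervalIntegrable
      continuity
    · filter_upwards with θ _ x _
      have hd1 : HasDerivAt (fun y : ℂ => v (y * e θ)) (deriv v (x * e θ) * e θ) x :=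
        HasDerivAt.comp x ((hv _).hasDerivAt) (hasDerivAt_mul_const (e θ))
      have hd2 : HasDerivAt (fun y : ℂ => vs (y * e (-θ))) (deriv vs (x * e (-θ)) * e (-θ)) x :=
        HasDerivAt.comp x ((hvsd _).hasDerivAt) (hasDerivAt_mul_const (e (-θ)))
      exact hd1.mul hd2
  -- g on reals equals Cint
  have g_real : ∀ t : ℝ, g (t:ℂ) = ((Cint v t : ℝ) : ℂ) := by
    intro t
    rw [hg]
    simp only
    have hpt : ∀ θ : ℝ, v ((t:ℂ) * e θ) * vs ((t:ℂ) * e (-θ))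
        = ((Complex.normSq (v ((t:ℂ) * e θ)) : ℝ) : ℂ) := by
      intro θ
      have h1 : vs ((t:ℂ) * e (-θ)) = (starRingEnd ℂ) (v ((t:ℂ) * e θ)) := by
        rw [hvs]
        simp only
        congr 1
        rw [hconj_e, Complex.conj_ofReal]
      rw [h1, Complex.mul_conj]
    rw [intervalIntegral.integral_congr (fun θ _ => hpt θ)]
    rw [intervalIntegral.integral_ofReal]
    rw [Cint, he]
  -- bound for g
  have h02 : (0:ℝ) ≤ 2*π := by positivity
  have sq_eq : ∀ (x : ℝ), x ^ (2:ℝ) = x ^ (2:ℕ) := fun x => by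
    rw [show ((2:ℝ)) = ((2:ℕ):ℝ) by norm_num, Real.rpow_natCast]
  have g_bound : ∀ w : ℂ, ‖g w‖ ≤ Cint v ((‖w‖ : ℝ) : ℂ) := by
    intro w
    have step1 : ‖g w‖ ≤ ∫ θ in (0:ℝ)..(2*π), ‖v (w * e θ)‖ * ‖vs (w * e (-θ))‖ := by
      rw [hg]
      refine le_trans (intervalIntegral.norm_integral_le_integral_norm h02) ?_
      apply le_of_eq
      apply intervalIntegral.integral_congr
      intro θ _
      simp [norm_mul]
    refine step1.trans ?_
    set μ : Measure ℝ := volume.restrict (Ioc (0:ℝ) (2*π)) with hμ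
    have memf : ∀ (f : ℝ → ℝ), Continuous f → MemLp f (ENNReal.ofReal 2) μ := by
      intro f hf
      obtain ⟨C, hC⟩ := (isCompact_Icc (a := (0:ℝ)) (b := 2*π)).exists_bound_of_continuousOn
        hf.continuousOn
      refine MemLp.of_bound hf.aestronglyMeasurable.restrict C ?_
      rw [hμ, ae_restrict_iff' measurableSet_Ioc]
      filter_upwards with θ hθ
      exact hC θ (Ioc_subset_Icc_self hθ)
    have hconj : Real.HolderConjugate 2 2 := Real.HolderConjugate.two_two
    have hold := integral_mul_le_Lp_mul_Lq_of_nonneg (μ := μ)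
      (f := fun θ => ‖v (w * e θ)‖) (g := fun θ => ‖vs (w * e (-θ))‖) hconj
      (Filter.Eventually.of_forall fun θ => norm_nonneg _)
      (Filter.Eventually.of_forall fun θ => norm_nonneg _)
      (memf _ (by fun_prop)) (memf _ (by fun_prop))
    rw [intervalIntegral.integral_of_le h02]
    refine le_trans hold (le_of_eq ?_)
    have e1 : ∫ θ, ‖v (w * e θ)‖ ^ (2:ℝ) ∂μ = Cint v ((‖w‖ : ℝ) : ℂ) := by
      rw [← Cint_rotate, Cint, intervalIntegral.integral_of_le h02]
      apply setIntegral_congr_fun measurableSet_Ioc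
      intro θ _
      simp only [sq_eq, he, Complex.sq_norm]
    have e2 : ∫ θ, ‖vs (w * e (-θ))‖ ^ (2:ℝ) ∂μ = Cint v ((‖w‖ : ℝ) : ℂ) := by
      rw [show ‖w‖ = ‖(starRingEnd ℂ) w‖ from (Complex.norm_conj w).symm,
        ← Cint_rotate, Cint, intervalIntegral.integral_of_le h02]
      apply setIntegral_congr_fun measurableSet_Ioc
      intro θ _
      simp only [sq_eq, hvs_norm, Complex.sq_norm]
      rw [hconj_e]
      simp only [he]
    rw [e1, e2, ← Real.sqrt_eq_rpow, Real.mul_self_sqrt (Cint_nonneg v _)]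
  -- maximum modulus
  have hsr' : Cint v (s:ℝ) = ‖g (s:ℂ)‖ := by
    rw [g_real s, Complex.norm_real, Real.norm_eq_abs, _root_.abs_of_nonneg (Cint_nonneg v _)]
  rw [hsr']
  have hfr : ∀ z ∈ frontier (Metric.ball (0:ℂ) r), ‖g z‖ ≤ Cint v r := by
    intro z hz
    rw [frontier_ball (0:ℂ) hr0.ne'] at hz
    have hz' : ‖z‖ = r := by simpa [mem_sphere_iff_norm] using hz
    have := g_bound z
    rwa [hz', show ((r:ℝ):ℂ) = ((r:ℝ):ℂ) from rfl] at this
  have hcl : (s:ℂ) ∈ closure (Metric.ball (0:ℂ) r) := by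
    rw [closure_ball (0:ℂ) hr0.ne']
    rw [Metric.mem_closedBall, dist_zero_right, Complex.norm_real, Real.norm_eq_abs,
      _root_.abs_of_nonneg hs]
    exact hsr
  have := Complex.norm_le_of_forall_mem_frontier_norm_le Metric.isBounded_ball
    gdiff.diffContOnCl hfr hcl
  simpa using this

lemma normSq_exp_real_mul_I (θ : ℝ) : Complex.normSq (Complex.exp (θ * Complex.I)) = 1 := by
  rw [← Complex.sq_norm, Complex.norm_exp_ofReal_mul_I, one_pow]

lemma rot_lintegral {v : ℂ → ℂ} (hv : Continuous v) (α : ℝ) (w : ℂ) (θ : ℝ) :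
    ∫⁻ z : ℂ, ENNReal.ofReal
        (Complex.normSq (v (w * Complex.exp (θ * Complex.I) * z)) * rexp (-(2*α) * Complex.normSq z))
    = ∫⁻ z : ℂ, ENNReal.ofReal (Complex.normSq (v (w * z)) * rexp (-(2*α) * Complex.normSq z)) := by
  have hc : Complex.exp (θ * Complex.I) ∈ Submonoid.unitSphere ℂ := by
    simp only [Submonoid.unitSphere, Submonoid.mem_mk, Subsemigroup.mem_mk, mem_sphere_iff_norm,
      sub_zero]
    exact Complex.norm_exp_ofReal_mul_I θ
  set c : Circle := ⟨_, hc⟩ with hcdef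
  have hmp : MeasurePreserving (⇑(rotation c)) volume volume :=
    LinearIsometryEquiv.measurePreserving _
  have hmeas : Measurable fun z : ℂ =>
      ENNReal.ofReal (Complex.normSq (v (w * z)) * rexp (-(2*α) * Complex.normSq z)) := by
    apply ENNReal.measurable_ofReal.comp
    fun_prop
  have hcomp := hmp.lintegral_comp hmeas
  rw [← hcomp]
  congr 1
  funext z
  have h1 : rotation c z = Complex.exp (θ * Complex.I) * z := rotation_apply c z
  rw [h1]
  congr 2
  · ring_nf
  · rw [Complex.normSq_mul, normSq_exp_real_mul_I, one_mul]

lemma lint_Ioc_eq {h : ℝ → ℝ} (hh : Continuous h) (h0 : ∀ x, 0 ≤ h x) :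
    ∫⁻ θ in Ioc (0:ℝ) (2*π), ENNReal.ofReal (h θ)
      = ENNReal.ofReal (∫ θ in (0:ℝ)..(2*π), h θ) := by
  have h02 : (0:ℝ) ≤ 2*π := by positivity
  rw [intervalIntegral.integral_of_le h02,
    ofReal_integral_eq_lintegral_ofReal (hh.integrableOn_Ioc) (ae_of_all _ h0)]

lemma avg_lintegral {v : ℂ → ℂ} (hv : Continuous v) (α : ℝ) {mu : ℝ} (hmu : 0 ≤ mu) :
    ENNReal.ofReal (2*π) *
      ∫⁻ z : ℂ, ENNReal.ofReal (Complex.normSq (v ((mu:ℂ) * z)) * rexp (-(2*α) * Complex.normSq z))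
    = ∫⁻ z : ℂ, ENNReal.ofReal (Cint v ((mu * ‖z‖ : ℝ) : ℂ))
        * ENNReal.ofReal (rexp (-(2*α) * Complex.normSq z)) := by
  have h02 : (0:ℝ) ≤ 2*π := by positivity
  set I := ∫⁻ z : ℂ, ENNReal.ofReal
    (Complex.normSq (v ((mu:ℂ) * z)) * rexp (-(2*α) * Complex.normSq z)) with hI
  have step1 : ENNReal.ofReal (2*π) * I = ∫⁻ _ in Ioc (0:ℝ) (2*π), I := by
    rw [setLIntegral_const, Real.volume_Ioc, mul_comm]
    norm_num
  rw [step1]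
  have step2 : ∫⁻ _ in Ioc (0:ℝ) (2*π), I
      = ∫⁻ θ in Ioc (0:ℝ) (2*π), ∫⁻ z : ℂ, ENNReal.ofReal
          (Complex.normSq (v ((mu:ℂ) * Complex.exp (θ * Complex.I) * z))
            * rexp (-(2*α) * Complex.normSq z)) := by
    apply lintegral_congr
    intro θ
    rw [rot_lintegral hv α _ θ, hI]
  rw [step2]
  rw [lintegral_lintegral_swap]
  · apply lintegral_congr
    intro z
    have inner : ∫⁻ θ in Ioc (0:ℝ) (2*π), ENNReal.ofReal
          (Complex.normSq (v ((mu:ℂ) * Complex.exp (θ * Complex.I) * z))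
            * rexp (-(2*α) * Complex.normSq z))
        = (∫⁻ θ in Ioc (0:ℝ) (2*π), ENNReal.ofReal
            (Complex.normSq (v ((mu:ℂ) * Complex.exp (θ * Complex.I) * z))))
          * ENNReal.ofReal (rexp (-(2*α) * Complex.normSq z)) := by
      rw [← lintegral_mul_const]
      · apply lintegral_congr
        intro θ
        rw [ENNReal.ofReal_mul (Complex.normSq_nonneg _)]
      · apply ENNReal.measurable_ofReal.comp
        fun_prop
    rw [inner]
    congr 1
    have e1 : ∀ θ : ℝ, (mu:ℂ) * Complex.exp (θ * Complex.I) * z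
        = ((mu:ℂ) * z) * Complex.exp (θ * Complex.I) := fun θ => by ring
    have e2 : ∫⁻ θ in Ioc (0:ℝ) (2*π), ENNReal.ofReal
          (Complex.normSq (v ((mu:ℂ) * Complex.exp (θ * Complex.I) * z)))
        = ENNReal.ofReal (Cint v ((mu:ℂ) * z)) := by
      rw [show (fun θ : ℝ => ENNReal.ofReal
          (Complex.normSq (v ((mu:ℂ) * Complex.exp (θ * Complex.I) * z))))
          = fun θ : ℝ => ENNReal.ofReal
          (Complex.normSq (v (((mu:ℂ) * z) * Complex.exp (θ * Complex.I)))) by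
        funext θ; rw [e1]]
      rw [lint_Ioc_eq (by fun_prop) (fun θ => Complex.normSq_nonneg _)]
      rfl
    rw [e2, Cint_rotate]
    congr 2
    rw [norm_mul]
    simp [Complex.norm_real, Real.norm_eq_abs, _root_.abs_of_nonneg hmu]
  · apply Measurable.aemeasurable
    apply ENNReal.measurable_ofReal.comp
    fun_prop

lemma dilation_le {v : ℂ → ℂ} (hv : Differentiable ℂ v) (α : ℝ) {lam : ℝ}
    (h0 : 0 ≤ lam) (h1 : lam ≤ 1) :
    ∫⁻ z : ℂ, ENNReal.ofReal (Complex.normSq (v ((lam:ℂ) * z)) * rexp (-(2*α) * Complex.normSq z))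
      ≤ ∫⁻ z : ℂ, ENNReal.ofReal (Complex.normSq (v z) * rexp (-(2*α) * Complex.normSq z)) := by
  have h2π0 : ENNReal.ofReal (2*π) ≠ 0 := by
    simp only [ne_eq, ENNReal.ofReal_eq_zero, not_le]
    positivity
  have h2πt : ENNReal.ofReal (2*π) ≠ ⊤ := ENNReal.ofReal_ne_top
  rw [← ENNReal.mul_le_mul_iff_right h2π0 h2πt]
  have hA1 : ENNReal.ofReal (2*π) *
      ∫⁻ z : ℂ, ENNReal.ofReal (Complex.normSq (v z) * rexp (-(2*α) * Complex.normSq z))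
      = ∫⁻ z : ℂ, ENNReal.ofReal (Cint v ((1 * ‖z‖ : ℝ) : ℂ))
        * ENNReal.ofReal (rexp (-(2*α) * Complex.normSq z)) := by
    have := avg_lintegral hv.continuous α (zero_le_one (α := ℝ))
    simpa using this
  rw [avg_lintegral hv.continuous α h0, hA1]
  apply lintegral_mono
  intro z
  apply mul_le_mul_left
  apply ENNReal.ofReal_le_ofReal
  apply Cint_mono hv (mul_nonneg h0 (norm_nonneg z))
  calc lam * ‖z‖ ≤ 1 * ‖z‖ :=
        mul_le_mul_of_nonneg_right h1 (norm_nonneg z)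
    _ = 1 * ‖z‖ := rfl

lemma smul_lintegral (f : ℂ → ENNReal) (hf : Measurable f) {lam : ℝ} (hlam : 0 < lam) :
    ∫⁻ z : ℂ, f z = ENNReal.ofReal (lam^2) * ∫⁻ z : ℂ, f ((lam:ℂ) * z) := by
  have hmap : Measure.map (lam • ·) (volume : Measure ℂ)
      = ENNReal.ofReal (|(lam ^ (2:ℕ))⁻¹|) • volume := by
    have := Measure.map_addHaar_smul (μ := (volume : Measure ℂ)) (E := ℂ) hlam.ne'
    rwa [Complex.finrank_real_complex] at this
  have h1 : ∫⁻ z : ℂ, f ((lam:ℂ) * z) = ∫⁻ z : ℂ, f (lam • z) := by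
    apply lintegral_congr
    intro z
    rw [Complex.real_smul]
  have h2 : ∫⁻ z : ℂ, f (lam • z) = ∫⁻ z : ℂ, f z ∂(Measure.map (lam • ·) volume) :=
    (lintegral_map hf (measurable_const_smul lam)).symm
  rw [h1, h2, hmap, lintegral_smul_measure, smul_eq_mul]
  rw [← mul_assoc, ← ENNReal.ofReal_mul (by positivity)]
  rw [_root_.abs_of_nonneg (by positivity), mul_inv_cancel₀ (by positivity), ENNReal.ofReal_one,
    one_mul]

lemma gauss_lint {α : ℝ} (hα : 0 < α) :
    ∫⁻ z : ℂ, ENNReal.ofReal (rexp (-(2*α) * Complex.normSq z)) = ENNReal.ofReal (π / (2*α)) := by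
  have heq : ∀ z : ℂ, rexp (-(2*α) * Complex.normSq z) = rexp (-(2*α) * ‖z‖^2) := by
    intro z
    rw [Complex.normSq_eq_norm_sq]
  have hint : Integrable (fun z : ℂ => rexp (-(2*α) * ‖z‖^2)) := by
    have hb : (0:ℝ) < ((2*α : ℝ):ℂ).re := by simpa using (by positivity : (0:ℝ) < 2*α)
    have h := GaussianFourier.integrable_cexp_neg_mul_sq_norm_add (V := ℂ) hb 0 0
    have h2 := h.norm
    apply h2.congr
    filter_upwards with z
    rw [zero_mul, add_zero, Complex.norm_exp, ← Complex.ofReal_neg,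
      ← Complex.ofReal_pow, ← Complex.ofReal_mul, Complex.ofReal_re]
  have hval : ∫ z : ℂ, rexp (-(2*α) * ‖z‖^2) = π / (2*α) := by
    rw [GaussianFourier.integral_rexp_neg_mul_sq_norm (by positivity : (0:ℝ) < 2*α)]
    rw [Complex.finrank_real_complex]
    norm_num
  calc ∫⁻ z : ℂ, ENNReal.ofReal (rexp (-(2*α) * Complex.normSq z))
      = ∫⁻ z : ℂ, ENNReal.ofReal (rexp (-(2*α) * ‖z‖^2)) := by
        apply lintegral_congr; intro z; rw [heq]
    _ = ENNReal.ofReal (∫ z : ℂ, rexp (-(2*α) * ‖z‖^2)) :=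
        (ofReal_integral_eq_lintegral_ofReal hint
          (ae_of_all _ fun z => (Real.exp_pos _).le)).symm
    _ = ENNReal.ofReal (π / (2*α)) := by rw [hval]

lemma main_upper {v : ℂ → ℂ} (hv : Differentiable ℂ v) {α₁ α₂ : ℝ}
    (hα₁ : 0 < α₁) (h12 : α₁ ≤ α₂) :
    ∫⁻ z : ℂ, ENNReal.ofReal (Complex.normSq (v z) * rexp (-(2*α₂) * Complex.normSq z))
      ≤ ENNReal.ofReal (α₁/α₂) *
        ∫⁻ z : ℂ, ENNReal.ofReal (Complex.normSq (v z) * rexp (-(2*α₁) * Complex.normSq z)) := by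
  have hα₂ : 0 < α₂ := lt_of_lt_of_le hα₁ h12
  set lam : ℝ := Real.sqrt (α₁/α₂) with hlam
  have hlam0 : 0 < lam := Real.sqrt_pos.2 (by positivity)
  have hlamsq : lam^2 = α₁/α₂ := Real.sq_sqrt (by positivity)
  have hlam1 : lam ≤ 1 := by
    have hsq : lam^2 ≤ 1 := by
      rw [hlamsq, div_le_one hα₂]
      exact h12
    nlinarith [hlam0.le]
  have hvc : Continuous v := hv.continuous
  have hsc := smul_lintegral
    (fun z => ENNReal.ofReal (Complex.normSq (v z) * rexp (-(2*α₂) * Complex.normSq z)))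
    (by apply ENNReal.measurable_ofReal.comp; fun_prop) hlam0
  rw [hsc]
  have hpt : ∀ z : ℂ, ENNReal.ofReal
        (Complex.normSq (v ((lam:ℂ) * z)) * rexp (-(2*α₂) * Complex.normSq ((lam:ℂ) * z)))
      = ENNReal.ofReal
        (Complex.normSq (v ((lam:ℂ) * z)) * rexp (-(2*α₁) * Complex.normSq z)) := by
    intro z
    congr 2
    rw [Complex.normSq_mul, Complex.normSq_ofReal]
    have hll : lam * lam = α₁/α₂ := by rw [← hlamsq]; ring
    have hA : α₂ * (lam * lam) = α₁ := by
      rw [hll]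
      field_simp
    rw [show -(2*α₂) * (lam * lam * Complex.normSq z)
        = -(2*(α₂ * (lam * lam))) * Complex.normSq z by ring, hA]
  calc ENNReal.ofReal (lam^2) * ∫⁻ z : ℂ, ENNReal.ofReal
        (Complex.normSq (v ((lam:ℂ) * z)) * rexp (-(2*α₂) * Complex.normSq ((lam:ℂ) * z)))
      = ENNReal.ofReal (lam^2) * ∫⁻ z : ℂ, ENNReal.ofReal
        (Complex.normSq (v ((lam:ℂ) * z)) * rexp (-(2*α₁) * Complex.normSq z)) := by
        congr 1
        apply lintegral_congr
        intro z
        rw [hpt]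
    _ ≤ ENNReal.ofReal (lam^2) * ∫⁻ z : ℂ, ENNReal.ofReal
        (Complex.normSq (v z) * rexp (-(2*α₁) * Complex.normSq z)) := by
        apply mul_le_mul_right
        exact dilation_le hv α₁ hlam0.le hlam1
    _ = ENNReal.ofReal (α₁/α₂) * _ := by rw [hlamsq]

lemma pointwise_eq (α : ℝ) (β : ℂ) (u : ℂ → ℂ) (z : ℂ) :
    ‖u z‖ ^ 2 * rexp (-2 * (α * ‖z‖ ^ 2 + (β * z^2).re))
    = Complex.normSq (u z * Complex.exp (-(β * z^2))) * rexp (-(2*α) * Complex.normSq z) := by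
  rw [Complex.normSq_mul, ← Complex.sq_norm (u z), ← Complex.sq_norm (Complex.exp _),
    Complex.norm_exp]
  rw [sq (rexp _), ← Real.exp_add, mul_assoc, ← Real.exp_add]
  congr 1
  rw [Complex.normSq_eq_norm_sq, Complex.neg_re]
  ring

lemma wnorm_eq (Φ : ℂ → ℝ) (α : ℝ) (β : ℂ)
    (hΦ : ∀ z : ℂ, Φ z = α * ‖z‖ ^ 2 + (β * z ^ 2).re) (u : ℂ → ℂ) :
    wnorm Φ u = (∫⁻ z : ℂ, ENNReal.ofReal
      (Complex.normSq (u z * Complex.exp (-(β * z^2))) * rexp (-(2*α) * Complex.normSq z)))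
      ^ (1 / 2 : ℝ) := by
  rw [wnorm]
  congr 1
  apply lintegral_congr
  intro z
  rw [hΦ z, pointwise_eq]


end Aux

open Complex Real Set in
/-- if `b = 0` and `a ≥ 1` then the embedding norm equals `a^{-1/2}`. -/
theorem embNorm_eq_of_b_eq_zero
    (α₁ α₂ : ℝ) (β₁ β₂ : ℂ) (hα₁ : 0 < α₁) (hα₂ : 0 < α₂)
    (Φ₁ Φ₂ : ℂ → ℝ)
    (hΦ₁ : ∀ z : ℂ, Φ₁ z = α₁ * ‖z‖ ^ 2 + (β₁ * z ^ 2).re)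
    (hΦ₂ : ∀ z : ℂ, Φ₂ z = α₂ * ‖z‖ ^ 2 + (β₂ * z ^ 2).re)
    (a b : ℝ) (ha : a = α₂ / α₁) (hb : b = ‖β₂ - β₁‖ / α₁)
    (hb0 : b = 0) (ha1 : 1 ≤ a) :
    embNorm Φ₁ Φ₂ = ENNReal.ofReal (a ^ (-(1 / 2) : ℝ)) := by
  have hβ : β₂ = β₁ := by
    have h1 : ‖β₂ - β₁‖ / α₁ = 0 := by rw [← hb, hb0]
    have h2 : ‖β₂ - β₁‖ = 0 := by
      rcases div_eq_zero_iff.mp h1 with h | h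
      · exact h
      · exact absurd h hα₁.ne'
    exact sub_eq_zero.mp (norm_eq_zero.mp h2)
  have hΦ₂' : ∀ z : ℂ, Φ₂ z = α₂ * ‖z‖ ^ 2 + (β₁ * z ^ 2).re := fun z => by
    rw [hΦ₂ z, hβ]
  have hapos : 0 < a := lt_of_lt_of_le one_pos ha1
  have h12 : α₁ ≤ α₂ := by
    rw [ha] at ha1
    exact (one_le_div hα₁).mp ha1
  have hval : (α₁/α₂) ^ ((1:ℝ)/2) = a ^ (-(1 / 2) : ℝ) := by
    have hinv : α₁/α₂ = a⁻¹ := by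
      rw [ha, inv_div]
    rw [hinv, Real.rpow_neg hapos.le, ← Real.inv_rpow hapos.le]
  have hofr : ENNReal.ofReal (α₁/α₂) ^ ((1:ℝ)/2) = ENNReal.ofReal (a ^ (-(1 / 2) : ℝ)) := by
    rw [ENNReal.ofReal_rpow_of_pos (by positivity), hval]
  have hwn0 : ∀ (av : ℝ) (Ψ : ℂ → ℝ), 0 < av →
      (∀ z : ℂ, Ψ z = av * ‖z‖ ^ 2 + (β₁ * z ^ 2).re) →
      wnorm Ψ (fun z => Complex.exp (β₁ * z ^ 2))
        = ENNReal.ofReal (π/(2*av)) ^ ((1:ℝ)/2) := by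
    intro av Ψ hav hΨ
    rw [wnorm_eq Ψ av β₁ hΨ]
    rw [show ∫⁻ z : ℂ, ENNReal.ofReal
        (Complex.normSq (Complex.exp (β₁ * z ^ 2) * Complex.exp (-(β₁ * z^2)))
          * rexp (-(2*av) * Complex.normSq z))
        = ∫⁻ z : ℂ, ENNReal.ofReal (rexp (-(2*av) * Complex.normSq z)) from
      lintegral_congr fun z => by
        rw [← Complex.exp_add, add_neg_cancel, Complex.exp_zero, Complex.normSq_one, one_mul]]
    rw [gauss_lint hav]
  rw [embNorm]
  apply le_antisymm
  · apply iSup₂_le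
    intro u hu
    obtain ⟨hud, hupos, hufin⟩ := hu
    have hvd : Differentiable ℂ (fun z => u z * Complex.exp (-(β₁ * z ^ 2))) :=
      hud.mul (Complex.differentiable_exp.comp
        (((differentiable_const β₁).mul (differentiable_pow 2)).neg))
    have hupper := main_upper hvd hα₁ h12
    have hw1 := wnorm_eq Φ₁ α₁ β₁ hΦ₁ u
    have hw2 := wnorm_eq Φ₂ α₂ β₁ hΦ₂' u
    have hstep : wnorm Φ₂ u ≤ ENNReal.ofReal (a ^ (-(1 / 2) : ℝ)) * wnorm Φ₁ u := by
      rw [hw1, hw2]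
      calc (∫⁻ z : ℂ, ENNReal.ofReal
            (Complex.normSq (u z * Complex.exp (-(β₁ * z^2)))
              * rexp (-(2*α₂) * Complex.normSq z))) ^ ((1:ℝ)/2)
          ≤ (ENNReal.ofReal (α₁/α₂) * ∫⁻ z : ℂ, ENNReal.ofReal
            (Complex.normSq (u z * Complex.exp (-(β₁ * z^2)))
              * rexp (-(2*α₁) * Complex.normSq z))) ^ ((1:ℝ)/2) :=
            ENNReal.rpow_le_rpow hupper (by norm_num)
        _ = ENNReal.ofReal (α₁/α₂) ^ ((1:ℝ)/2) * (∫⁻ z : ℂ, ENNReal.ofReal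
            (Complex.normSq (u z * Complex.exp (-(β₁ * z^2)))
              * rexp (-(2*α₁) * Complex.normSq z))) ^ ((1:ℝ)/2) :=
            ENNReal.mul_rpow_of_nonneg _ _ (by norm_num)
        _ = ENNReal.ofReal (a ^ (-(1 / 2) : ℝ)) * (∫⁻ z : ℂ, ENNReal.ofReal
            (Complex.normSq (u z * Complex.exp (-(β₁ * z^2)))
              * rexp (-(2*α₁) * Complex.normSq z))) ^ ((1:ℝ)/2) := by rw [hofr]
    exact ENNReal.div_le_of_le_mul hstep
  · have hw01 := hwn0 α₁ Φ₁ hα₁ hΦ₁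
    have hw02 := hwn0 α₂ Φ₂ hα₂ hΦ₂'
    have hu₀d : Differentiable ℂ (fun z : ℂ => Complex.exp (β₁ * z ^ 2)) :=
      Complex.differentiable_exp.comp ((differentiable_const β₁).mul (differentiable_pow 2))
    have hpos : 0 < wnorm Φ₁ (fun z : ℂ => Complex.exp (β₁ * z ^ 2)) := by
      rw [hw01]
      exact ENNReal.rpow_pos (ENNReal.ofReal_pos.2 (by positivity)) ENNReal.ofReal_ne_top
    have hfin : wnorm Φ₁ (fun z : ℂ => Complex.exp (β₁ * z ^ 2)) < ⊤ := by
      rw [hw01]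
      exact ENNReal.rpow_lt_top_of_nonneg (by norm_num) ENNReal.ofReal_ne_top
    have hratio : wnorm Φ₂ (fun z : ℂ => Complex.exp (β₁ * z ^ 2))
        / wnorm Φ₁ (fun z : ℂ => Complex.exp (β₁ * z ^ 2))
        = ENNReal.ofReal (a ^ (-(1 / 2) : ℝ)) := by
      rw [hw01, hw02, ← ENNReal.div_rpow_of_nonneg _ _ (by norm_num : (0:ℝ) ≤ 1/2)]
      rw [← ENNReal.ofReal_div_of_pos (by positivity)]
      rw [show (π/(2*α₂))/(π/(2*α₁)) = α₁/α₂ by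
        rw [div_div_div_comm, div_self Real.pi_ne_zero, one_div, inv_div,
          mul_div_mul_left _ _ (two_ne_zero)]]
      exact hofr
    exact le_iSup₂_of_le (fun z : ℂ => Complex.exp (β₁ * z ^ 2)) ⟨hu₀d, hpos, hfin⟩
      (le_of_eq hratio.symm)
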